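/- Let (S,T) be a pair of random variables on {0,...,m} × {0,...,n} with binomial moments S_{i,j} = E[C(S,i) C(T,j)]. Then for all u,v ≥ 1, P(S ≥ u, T ≥ v) = ∑_{i=u}^{m} ∑_{j=v}^{n} (-1)^{i+j-(u+v)} C(i-1,u-1) C(j-1,v-1) S_{i,j}. -/

import Mathlib

open MeasureTheory Finset

lemma alt_zero (j s : ℕ) (hjs : j < s) :
    ∑ k ∈ Finset.Icc j s, (-1:ℝ)^(k-j) * (k.choose j) * (s.choose k) = 0 := by
  have hmap : Finset.Icc j s = (Finset.range (s - j + 1)).image (fun t => j + t) := by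
    ext x
    simp only [Finset.mem_Icc, Finset.mem_image, Finset.mem_range]
    constructor
    · rintro ⟨h1, h2⟩; exact ⟨x - j, by omega, by omega⟩
    · rintro ⟨t, ht, rfl⟩; omega
  rw [hmap, Finset.sum_image (by intro a _ b _ h; simp only at h; omega)]
  have hterm : ∀ t ∈ Finset.range (s - j + 1),
      (-1:ℝ)^(j + t - j) * ((j+t).choose j) * (s.choose (j+t))
        = (s.choose j : ℝ) * ((-1:ℝ)^t * ((s-j).choose t)) := by
    intro t ht
    have h1 : s.choose (j+t) * (j+t).choose j = s.choose j * (s - j).choose t := by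
      have := Nat.choose_mul (n := s) (k := j + t) (s := j) (by omega)
      simpa using this
    have h2 : j + t - j = t := by omega
    rw [h2]
    have := congrArg (fun x : ℕ => (x : ℝ)) h1
    push_cast at this
    linear_combination (-1:ℝ)^t * this
  rw [Finset.sum_congr rfl hterm, ← Finset.mul_sum]
  have : (∑ t ∈ Finset.range (s - j + 1), ((-1:ℝ)^t * ((s-j).choose t))) = 0 := by
    have h := Int.alternating_sum_range_choose_of_ne (n := s - j) (by omega)
    have := congrArg (fun x : ℤ => (x : ℝ)) h
    push_cast at this
    convert this using 2
  rw [this, mul_zero]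

lemma key_icc (u : ℕ) (hu : 1 ≤ u) : ∀ s, u ≤ s →
    ∑ i ∈ Finset.Icc u s, (-1:ℝ)^(i-u) * (((i-1).choose (u-1) : ℕ)) * (s.choose i) = 1 := by
  intro s hs
  induction s, hs using Nat.le_induction with
  | base => simp
  | succ s hs IH =>
    have hsplit : ∀ i ∈ Finset.Icc u (s+1),
        (-1:ℝ)^(i-u) * (((i-1).choose (u-1) : ℕ)) * ((s+1).choose i)
          = (-1:ℝ)^(i-u) * (((i-1).choose (u-1) : ℕ)) * (s.choose (i-1))
            + (-1:ℝ)^(i-u) * (((i-1).choose (u-1) : ℕ)) * (s.choose i) := by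
      intro i hi
      simp only [Finset.mem_Icc] at hi
      obtain ⟨k, rfl⟩ : ∃ k, i = k + 1 := ⟨i-1, by omega⟩
      rw [Nat.choose_succ_succ']
      push_cast
      ring
    rw [Finset.sum_congr rfl hsplit, Finset.sum_add_distrib]
    have h2 : ∑ i ∈ Finset.Icc u (s+1),
        (-1:ℝ)^(i-u) * (((i-1).choose (u-1) : ℕ)) * (s.choose i) = 1 := by
      rw [Finset.sum_Icc_succ_top (by omega : u ≤ s + 1)]
      simp [Nat.choose_succ_self, IH]
    have h1 : ∑ i ∈ Finset.Icc u (s+1),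
        (-1:ℝ)^(i-u) * (((i-1).choose (u-1) : ℕ)) * (s.choose (i-1)) = 0 := by
      have hmap : Finset.Icc u (s+1) = (Finset.Icc (u-1) s).image (fun k => k + 1) := by
        ext x
        simp only [Finset.mem_Icc, Finset.mem_image]
        constructor
        · rintro ⟨a1, a2⟩; exact ⟨x - 1, ⟨by omega, by omega⟩, by omega⟩
        · rintro ⟨k, hk, rfl⟩; omega
      rw [hmap, Finset.sum_image (by intro a _ b _ h; simp only at h; omega)]
      have : ∀ k ∈ Finset.Icc (u-1) s,
          (-1:ℝ)^(k+1-u) * (((k+1-1).choose (u-1) : ℕ)) * (s.choose (k+1-1))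
            = (-1:ℝ)^(k-(u-1)) * ((k.choose (u-1) : ℕ)) * (s.choose k) := by
        intro k hk
        simp only [Finset.mem_Icc] at hk
        have : k + 1 - u = k - (u-1) := by omega
        simp [this]
      rw [Finset.sum_congr rfl this]
      exact alt_zero (u-1) s (by omega)
    rw [h1, h2]
    norm_num

lemma key_full (u m s : ℕ) (hu : 1 ≤ u) (hs : s ≤ m) :
    ∑ i ∈ Finset.Icc u m, (-1:ℝ)^(i-u) * (((i-1).choose (u-1) : ℕ)) * (s.choose i)
      = if u ≤ s then 1 else 0 := by
  by_cases h : u ≤ s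
  · rw [if_pos h]
    refine Eq.trans ?_ (key_icc u hu s h)
    refine (Finset.sum_subset (Finset.Icc_subset_Icc_right hs) ?_).symm
    intro x hx hnx
    simp only [Finset.mem_Icc] at hx hnx
    rw [Nat.choose_eq_zero_of_lt (show s < x by omega)]
    simp
  · rw [if_neg h]
    apply Finset.sum_eq_zero
    intro x hx
    simp only [Finset.mem_Icc] at hx
    rw [Nat.choose_eq_zero_of_lt (show s < x by omega)]
    simp

theorem bivariate_tail_from_binomial_moments
    {Ω : Type*} [MeasurableSpace Ω] (μ : Measure Ω) [IsProbabilityMeasure μ]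
    (m n : ℕ) (S T : Ω → ℕ) (hS : Measurable S) (hT : Measurable T)
    (hSm : ∀ᵐ ω ∂μ, S ω ≤ m) (hTn : ∀ᵐ ω ∂μ, T ω ≤ n)
    (u v : ℕ) (hu : 1 ≤ u) (hv : 1 ≤ v) :
    (μ {ω | u ≤ S ω ∧ v ≤ T ω}).toReal =
      ∑ i ∈ Finset.Icc u m, ∑ j ∈ Finset.Icc v n,
        (-1 : ℝ) ^ ((i - u) + (j - v)) * ((i - 1).choose (u - 1)) *
          ((j - 1).choose (v - 1)) *
          ∫ ω, (((S ω).choose i : ℝ) * ((T ω).choose j : ℝ)) ∂μ := by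
  classical
  have hmeasf : ∀ i j : ℕ, Measurable fun ω => ((S ω).choose i : ℝ) * ((T ω).choose j : ℝ) := by
    intro i j
    have h1 : Measurable fun ω => ((S ω).choose i : ℝ) :=
      (measurable_from_top (f := fun s : ℕ => ((s.choose i : ℕ) : ℝ))).comp hS
    have h2 : Measurable fun ω => ((T ω).choose j : ℝ) :=
      (measurable_from_top (f := fun t : ℕ => ((t.choose j : ℕ) : ℝ))).comp hT
    exact h1.mul h2
  have hint : ∀ i j : ℕ, Integrable (fun ω => ((S ω).choose i : ℝ) * ((T ω).choose j : ℝ)) μ := by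
    intro i j
    refine Integrable.mono' (integrable_const ((m.choose i : ℝ) * (n.choose j)))
      (hmeasf i j).aestronglyMeasurable ?_
    filter_upwards [hSm, hTn] with ω h1 h2
    rw [Real.norm_eq_abs, abs_of_nonneg (by positivity)]
    have b1 : ((S ω).choose i : ℝ) ≤ m.choose i := by
      exact_mod_cast Nat.choose_le_choose i h1
    have b2 : ((T ω).choose j : ℝ) ≤ n.choose j := by
      exact_mod_cast Nat.choose_le_choose j h2
    have : (0:ℝ) ≤ ((T ω).choose j : ℝ) := by positivity
    nlinarith [Nat.cast_nonneg (α := ℝ) (m.choose i)]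
  set A : Set Ω := {ω | u ≤ S ω ∧ v ≤ T ω} with hA
  have hmeasA : MeasurableSet A := by
    have : A = S ⁻¹' {s | u ≤ s} ∩ T ⁻¹' {t | v ≤ t} := rfl
    rw [this]
    exact (hS MeasurableSpace.measurableSet_top).inter (hT MeasurableSpace.measurableSet_top)
  -- move constants inside integrals and swap sum/integral
  have step1 : ∑ i ∈ Finset.Icc u m, ∑ j ∈ Finset.Icc v n,
        (-1 : ℝ) ^ ((i - u) + (j - v)) * ((i - 1).choose (u - 1)) *
          ((j - 1).choose (v - 1)) *
          ∫ ω, (((S ω).choose i : ℝ) * ((T ω).choose j : ℝ)) ∂μ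
      = ∫ ω, ∑ i ∈ Finset.Icc u m, ∑ j ∈ Finset.Icc v n,
          (-1 : ℝ) ^ ((i - u) + (j - v)) * ((i - 1).choose (u - 1)) *
            ((j - 1).choose (v - 1)) * (((S ω).choose i : ℝ) * ((T ω).choose j : ℝ)) ∂μ := by
    rw [integral_finset_sum]
    · refine Finset.sum_congr rfl fun i _ => ?_
      rw [integral_finset_sum]
      · exact Finset.sum_congr rfl fun j _ => (integral_const_mul _ _).symm
      · exact fun j _ => ((hint i j).const_mul _)
    · exact fun i _ => integrable_finset_sum _ fun j _ => ((hint i j).const_mul _)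
  rw [step1]
  have hptwise : ∀ᵐ ω ∂μ, (∑ i ∈ Finset.Icc u m, ∑ j ∈ Finset.Icc v n,
          (-1 : ℝ) ^ ((i - u) + (j - v)) * ((i - 1).choose (u - 1)) *
            ((j - 1).choose (v - 1)) * (((S ω).choose i : ℝ) * ((T ω).choose j : ℝ)))
        = A.indicator (fun _ => (1:ℝ)) ω := by
    filter_upwards [hSm, hTn] with ω h1 h2
    have hfac : (∑ i ∈ Finset.Icc u m, ∑ j ∈ Finset.Icc v n,
          (-1 : ℝ) ^ ((i - u) + (j - v)) * ((i - 1).choose (u - 1)) *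
            ((j - 1).choose (v - 1)) * (((S ω).choose i : ℝ) * ((T ω).choose j : ℝ)))
        = (∑ i ∈ Finset.Icc u m, (-1:ℝ)^(i-u) * (((i-1).choose (u-1) : ℕ)) * ((S ω).choose i))
          * (∑ j ∈ Finset.Icc v n, (-1:ℝ)^(j-v) * (((j-1).choose (v-1) : ℕ)) * ((T ω).choose j)) := by
      rw [Finset.sum_mul_sum]
      refine Finset.sum_congr rfl fun i _ => Finset.sum_congr rfl fun j _ => ?_
      rw [pow_add]
      ring
    rw [hfac, key_full u m (S ω) hu h1, key_full v n (T ω) hv h2]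
    by_cases hω : ω ∈ A
    · rw [Set.indicator_of_mem hω]
      obtain ⟨c1, c2⟩ := hω
      rw [if_pos c1, if_pos c2]
      norm_num
    · rw [Set.indicator_of_notMem hω]
      rcases not_and_or.mp hω with h | h
      · rw [if_neg h]; ring
      · rw [if_neg h]; ring
  rw [integral_congr_ae hptwise, integral_indicator_const _ hmeasA]
  simp
  rfl
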